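/- Small model property for ADT₁: for every adt t over Prop with cd(t) ≤ 1, the language ⟦t⟧ is nonempty if and only if there exists a trace τ ∈ ⟦t⟧ whose length is at most |t|. -/

import Mathlib

namespace ADTpaper

/-- Propositional formulas over a set `P` of propositional variables. -/
inductive PropForm (P : Type) : Type where
  | var : P → PropForm P
  | tru : PropForm P
  | fls : PropForm P
  | neg : PropForm P → PropForm P
  | conj : PropForm P → PropForm P → PropForm P
  | disj : PropForm P → PropForm P → PropForm P

/-- A valuation is a subset of `P` (an element of the alphabet `Σ = 2^P`). -/
abbrev Val (P : Type) : Type := Set P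

/-- A trace is a finite word over the alphabet `Σ = 2^P`. -/
abbrev Trace (P : Type) : Type := List (Val P)

/-- Satisfaction of a propositional formula by a valuation. -/
def PropForm.eval {P : Type} (v : Val P) : PropForm P → Prop
  | .var p => p ∈ v
  | .tru => True
  | .fls => False
  | .neg φ => ¬ PropForm.eval v φ
  | .conj φ ψ => PropForm.eval v φ ∧ PropForm.eval v ψ
  | .disj φ ψ => PropForm.eval v φ ∨ PropForm.eval v ψ

/-- Size of a propositional formula. -/
def PropForm.size {P : Type} : PropForm P → ℕ
  | .var _ => 1
  | .tru => 1
  | .fls => 1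
  | .neg φ => PropForm.size φ + 1
  | .conj φ ψ => PropForm.size φ + PropForm.size ψ + 1
  | .disj φ ψ => PropForm.size φ + PropForm.size ψ + 1

/-- Attack-defense trees over `P` (operators taken binary, w.l.o.g. by associativity). -/
inductive ADT (P : Type) : Type where
  | eps  : ADT P
  | leaf : PropForm P → ADT P
  | orA  : ADT P → ADT P → ADT P
  | sand : ADT P → ADT P → ADT P
  | andA : ADT P → ADT P → ADT P
  | cm   : ADT P → ADT P → ADT P

/-- Trace semantics of an adt: a language over the alphabet `Σ = 2^P`. -/
def sem {P : Type} : ADT P → Language (Val P)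
  | .eps => 1
  | .leaf γ => {w | ∃ w' v, w = w' ++ [v] ∧ PropForm.eval v γ}
  | .orA t₁ t₂ => sem t₁ ⊔ sem t₂
  | .sand t₁ t₂ => sem t₁ * sem t₂
  | .andA t₁ t₂ => (sem t₁ * ⊤ ⊓ sem t₂) ⊔ (sem t₂ * ⊤ ⊓ sem t₁)
  | .cm t₁ t₂ => sem t₁ \ sem t₂

/-- Countermeasure-depth of an adt. -/
def cd {P : Type} : ADT P → ℕ
  | .eps => 0
  | .leaf _ => 0
  | .orA t₁ t₂ => max (cd t₁) (cd t₂)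
  | .sand t₁ t₂ => max (cd t₁) (cd t₂)
  | .andA t₁ t₂ => max (cd t₁) (cd t₂)
  | .cm t₁ t₂ => max (cd t₁) (cd t₂ + 1)

/-- The size of an adt: the sum of the sizes of its leaves, the leaf `ε` having size 1. -/
def ADT.size {P : Type} : ADT P → ℕ
  | .eps => 1
  | .leaf γ => PropForm.size γ
  | .orA t₁ t₂ => ADT.size t₁ + ADT.size t₂
  | .sand t₁ t₂ => ADT.size t₁ + ADT.size t₂
  | .andA t₁ t₂ => ADT.size t₁ + ADT.size t₂
  | .cm t₁ t₂ => ADT.size t₁ + ADT.size t₂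


/-! ### Auxiliary machinery for the small model property -/

section Select

variable {α : Type*}

/-- Select the elements of a list according to a boolean mask. -/
def select : List α → List Bool → List α
  | [], _ => []
  | _, [] => []
  | a :: l, b :: m => if b then a :: select l m else select l m

@[simp] lemma select_nil (m : List Bool) : select ([] : List α) m = [] := by
  cases m <;> rfl

@[simp] lemma select_nil_mask (l : List α) : select l [] = [] := by
  cases l <;> rfl

lemma select_cons (a : α) (l : List α) (b : Bool) (m : List Bool) :
    select (a :: l) (b :: m) = if b then a :: select l m else select l m := rfl

lemma select_sublist : ∀ (l : List α) (m : List Bool), List.Sublist (select l m) l := by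
  intro l
  induction l with
  | nil => intro m; simp
  | cons a l ih =>
    intro m
    cases m with
    | nil => simp
    | cons b m =>
      rw [select_cons]
      split
      · exact (ih m).cons₂ a
      · exact (ih m).cons a

lemma length_select_le_count : ∀ (l : List α) (m : List Bool),
    (select l m).length ≤ m.count true := by
  intro l
  induction l with
  | nil => intro m; simp
  | cons a l ih =>
    intro m
    cases m with
    | nil => simp
    | cons b m =>
      rw [select_cons]
      cases b <;> simp [List.count_cons] <;>
        [exact le_trans (ih m) (by omega); exact ih m]

lemma select_append : ∀ (l₁ : List α) (m₁ : List Bool) (l₂ : List α) (m₂ : List Bool),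
    m₁.length = l₁.length →
    select (l₁ ++ l₂) (m₁ ++ m₂) = select l₁ m₁ ++ select l₂ m₂ := by
  intro l₁
  induction l₁ with
  | nil => intro m₁ l₂ m₂ h; rw [List.length_nil, List.length_eq_zero_iff] at h; subst h; simp
  | cons a l ih =>
    intro m₁ l₂ m₂ h
    cases m₁ with
    | nil => simp at h
    | cons b m =>
      simp only [List.cons_append, select_cons]
      rw [ih m l₂ m₂ (by simpa using h)]
      split <;> simp

end Select

section Mask

/-- Pointwise order on boolean masks of equal length. -/
abbrev maskLe (m m' : List Bool) : Prop := List.Forall₂ (· ≤ ·) m m'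

lemma maskLe_refl (m : List Bool) : maskLe m m :=
  List.forall₂_same.2 (fun _ _ => le_rfl)

lemma maskLe_length_eq {m m' : List Bool} (h : maskLe m m') : m.length = m'.length :=
  List.Forall₂.length_eq h

lemma maskLe_trans : ∀ {a b c : List Bool}, maskLe a b → maskLe b c → maskLe a c := by
  intro a b c h₁
  induction h₁ generalizing c with
  | nil => intro h; exact h
  | cons hxy h ih =>
    intro h₂
    cases h₂ with
    | cons hyz h₂' => exact List.Forall₂.cons (le_trans hxy hyz) (ih h₂')

lemma maskLe_append_split : ∀ {m₁ m₂ m' : List Bool}, maskLe (m₁ ++ m₂) m' →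
    ∃ a b, m' = a ++ b ∧ maskLe m₁ a ∧ maskLe m₂ b := by
  intro m₁
  induction m₁ with
  | nil => intro m₂ m' h; exact ⟨[], m', rfl, List.Forall₂.nil, h⟩
  | cons x l ih =>
    intro m₂ m' h
    cases h with
    | @cons _ y _ l' hxy h' =>
      obtain ⟨a, b, rfl, ha, hb⟩ := ih h'
      exact ⟨y :: a, b, rfl, List.Forall₂.cons hxy ha, hb⟩

lemma maskLe_or_left : ∀ {a b : List Bool}, a.length = b.length →
    maskLe a (List.zipWith (· || ·) a b) := by
  intro a
  induction a with
  | nil => intro b h; simp [List.Forall₂.nil]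
  | cons x l ih =>
    intro b h
    cases b with
    | nil => simp at h
    | cons y b =>
      exact List.Forall₂.cons (by cases x <;> cases y <;> simp) (ih (by simpa using h))

lemma maskLe_or_right : ∀ {a b : List Bool}, a.length = b.length →
    maskLe b (List.zipWith (· || ·) a b) := by
  intro a
  induction a with
  | nil => intro b h
           have : b = [] := by
             cases b with
             | nil => rfl
             | cons y b => simp at h
           subst this; exact List.Forall₂.nil
  | cons x l ih =>
    intro b h
    cases b with
    | nil => exact List.Forall₂.nil
    | cons y b =>
      exact List.Forall₂.cons (by cases x <;> cases y <;> simp) (ih (by simpa using h))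

lemma count_or_le : ∀ (a b : List Bool),
    (List.zipWith (· || ·) a b).count true ≤ a.count true + b.count true := by
  intro a
  induction a with
  | nil => intro b; simp
  | cons x l ih =>
    intro b
    cases b with
    | nil => simp
    | cons y b =>
      have := ih b
      cases x <;> cases y <;> simp [List.count_cons] <;> omega

lemma length_zipWith_or {a b : List Bool} (h : a.length = b.length) :
    (List.zipWith (· || ·) a b).length = a.length := by
  simp [List.length_zipWith, h]

end Mask

section NFI

variable {α : Type*}

/-- A language closed under insertion of a letter at any non-final position. -/
def NFIns (L : Set (List α)) : Prop :=
  ∀ (x : List α) (a : α) (y : List α), y ≠ [] → x ++ y ∈ L → x ++ a :: y ∈ L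

lemma NFIns.top : NFIns (⊤ : Language α) := fun _ _ _ _ _ => trivial

lemma NFIns.union {L₁ L₂ : Language α} (h₁ : NFIns L₁) (h₂ : NFIns L₂) :
    NFIns (L₁ ⊔ L₂) := by
  rintro x a y hy (h | h)
  · exact Or.inl (h₁ x a y hy h)
  · exact Or.inr (h₂ x a y hy h)

lemma NFIns.inter {L₁ L₂ : Language α} (h₁ : NFIns L₁) (h₂ : NFIns L₂) :
    NFIns (L₁ ⊓ L₂) := by
  rintro x a y hy ⟨h, h'⟩
  exact ⟨h₁ x a y hy h, h₂ x a y hy h'⟩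

lemma NFIns.mul {L₁ L₂ : Language α} (h₁ : NFIns L₁) (h₂ : NFIns L₂) :
    NFIns (L₁ * L₂) := by
  rintro x a y hy h
  change x ++ y ∈ (L₁ * L₂ : Language α) at h
  rw [Language.mem_mul] at h
  obtain ⟨u, hu, w, hw, huw⟩ := h
  rcases List.append_eq_append_iff.1 huw.symm with ⟨k, hk, hk'⟩ | ⟨k, hk, hk'⟩
  · -- u = x ++ k, y = k ++ w
    rcases eq_or_ne k [] with rfl | hkne
    · simp only [List.append_nil] at hk
      subst hk
      have hw' : w ≠ [] := by simpa [hk'] using hy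
      refine Language.mem_mul.2 ⟨u, hu, a :: w, ?_, by simp [hk']⟩
      have h₂' : [] ++ a :: w ∈ L₂ := h₂ [] a w hw' (by rw [List.nil_append]; exact hw)
      simpa using h₂'
    · refine Language.mem_mul.2 ⟨x ++ a :: k, h₁ x a k hkne (hk ▸ hu), w, hw, by simp [hk']⟩
  · -- x = u ++ k, w = k ++ y
    refine Language.mem_mul.2 ⟨u, hu, k ++ a :: y, h₂ k a y hy (hk' ▸ hw), by simp [hk]⟩

lemma NFIns.insert_sublist {L : Set (List α)} (hL : NFIns L) {σ τ : List α}
    (h : List.Sublist σ τ) : ∀ (p s : List α), s ≠ [] → p ++ σ ++ s ∈ L → p ++ τ ++ s ∈ L := by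
  induction h with
  | slnil => intro p s _ h; exact h
  | @cons l₁ l₂ a h ih =>
    intro p s hs hmem
    have := ih p s hs hmem
    have := hL p a (l₂ ++ s) (by simp [hs]) (by simpa [List.append_assoc] using this)
    simpa [List.append_assoc] using this
  | @cons_cons l₁ l₂ a h ih =>
    intro p s hs hmem
    have := ih (p ++ [a]) s hs (by simpa [List.append_assoc] using hmem)
    simpa [List.append_assoc] using this

end NFI

section ADTLemmas

variable {P : Type}

lemma maskLe_true_singleton : ∀ {b : List Bool}, maskLe [true] b → b = [true] := by
  rintro (_ | ⟨y, b⟩) h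
  · cases h
  · cases h with
    | cons hy hl =>
      cases hl
      rw [(le_antisymm hy (Bool.le_true _)).symm]

lemma PropForm.size_pos (γ : PropForm P) : 1 ≤ γ.size := by
  cases γ <;> simp [PropForm.size]

lemma ADT.size_pos (t : ADT P) : 1 ≤ t.size := by
  induction t with
  | eps => simp [ADT.size]
  | leaf γ => exact γ.size_pos
  | orA t₁ t₂ ih₁ ih₂ => simp [ADT.size]; omega
  | sand t₁ t₂ ih₁ ih₂ => simp [ADT.size]; omega
  | andA t₁ t₂ ih₁ ih₂ => simp [ADT.size]; omega
  | cm t₁ t₂ ih₁ ih₂ => simp [ADT.size]; omega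

/-- Countermeasure-free adts have semantics closed under non-final insertions. -/
lemma nfins_of_cd_zero (t : ADT P) (h : cd t = 0) : NFIns (sem t) := by
  induction t with
  | eps =>
    intro x a y hy hmem
    rw [sem] at hmem
    change x ++ y ∈ (1 : Language (Val P)) at hmem
    rw [Language.mem_one] at hmem
    exact absurd (List.append_eq_nil_iff.1 hmem).2 hy
  | leaf γ =>
    intro x a y hy hmem
    obtain ⟨w, v, hw, hv⟩ := hmem
    rcases y.eq_nil_or_concat with rfl | ⟨y', b, rfl⟩
    · exact absurd rfl hy
    · have hxy : (x ++ y') ++ [b] = w ++ [v] := by simpa [List.append_assoc] using hw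
      have hb : b = v := by
        have := List.append_inj' hxy (by simp)
        simpa using this.2
      subst hb
      exact ⟨x ++ a :: y', b, by simp, hv⟩
  | orA t₁ t₂ ih₁ ih₂ =>
    simp [cd] at h
    exact NFIns.union (ih₁ h.1) (ih₂ h.2)
  | sand t₁ t₂ ih₁ ih₂ =>
    simp [cd] at h
    exact NFIns.mul (ih₁ h.1) (ih₂ h.2)
  | andA t₁ t₂ ih₁ ih₂ =>
    simp [cd] at h
    exact NFIns.union (NFIns.inter (NFIns.mul (ih₁ h.1) NFIns.top) (ih₂ h.2))
      (NFIns.inter (NFIns.mul (ih₂ h.2) NFIns.top) (ih₁ h.1))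
  | cm t₁ t₂ ih₁ ih₂ =>
    simp [cd] at h

/-- Key inductive lemma: any trace in the semantics of an adt of countermeasure-depth
at most 1 carries a small monotone witness mask. -/
lemma exists_witness_mask (t : ADT P) (ht : cd t ≤ 1) :
    ∀ τ : Trace P, τ ∈ sem t → ∃ m : List Bool, m.length = τ.length ∧
      m.count true ≤ t.size ∧
      ∀ m', maskLe m m' → select τ m' ∈ sem t := by
  induction t with
  | eps =>
    intro τ hτ
    rw [sem, Language.mem_one] at hτ
    subst hτ
    exact ⟨[], rfl, by simp [ADT.size], fun m' _ => by simp [sem, Language.mem_one]⟩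
  | leaf γ =>
    intro τ hτ
    obtain ⟨w, v, rfl, hv⟩ := hτ
    refine ⟨List.replicate w.length false ++ [true], by simp, ?_, ?_⟩
    · simp [List.count_append, List.count_replicate]
      exact γ.size_pos
    · intro m' hm'
      obtain ⟨a, b, rfl, ha, hb⟩ := maskLe_append_split hm'
      have hb' : b = [true] := maskLe_true_singleton hb
      subst hb'
      rw [select_append _ _ _ _ (by simpa using (maskLe_length_eq ha).symm)]
      exact ⟨select w a, v, by simp [select], hv⟩
  | orA t₁ t₂ ih₁ ih₂ =>
    intro τ hτ
    simp [cd] at ht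
    rcases hτ with hτ | hτ
    · obtain ⟨m, h1, h2, h3⟩ := ih₁ ht.1 τ hτ
      exact ⟨m, h1, le_trans h2 (Nat.le_add_right _ _),
        fun m' hm' => Or.inl (h3 m' hm')⟩
    · obtain ⟨m, h1, h2, h3⟩ := ih₂ ht.2 τ hτ
      exact ⟨m, h1, le_trans h2 (Nat.le_add_left _ _),
        fun m' hm' => Or.inr (h3 m' hm')⟩
  | sand t₁ t₂ ih₁ ih₂ =>
    intro τ hτ
    simp [cd] at ht
    rw [sem, Language.mem_mul] at hτ
    obtain ⟨u, hu, w, hw, rfl⟩ := hτ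
    obtain ⟨m₁, h1, h2, h3⟩ := ih₁ ht.1 u hu
    obtain ⟨m₂, g1, g2, g3⟩ := ih₂ ht.2 w hw
    refine ⟨m₁ ++ m₂, by simp [h1, g1], ?_, ?_⟩
    · simp [List.count_append, ADT.size]; omega
    · intro m' hm'
      obtain ⟨a, b, rfl, ha, hb⟩ := maskLe_append_split hm'
      rw [select_append _ _ _ _ (by rw [← maskLe_length_eq ha, h1])]
      exact Language.mem_mul.2 ⟨select u a, h3 a ha, select w b, g3 b hb, rfl⟩
  | andA t₁ t₂ ih₁ ih₂ =>
    intro τ hτ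
    simp [cd] at ht
    have main : ∀ (s₁ s₂ : ADT P), cd s₁ ≤ 1 → cd s₂ ≤ 1 →
        (∀ τ : Trace P, τ ∈ sem s₁ → ∃ m : List Bool, m.length = τ.length ∧
          m.count true ≤ s₁.size ∧ ∀ m', maskLe m m' → select τ m' ∈ sem s₁) →
        (∀ τ : Trace P, τ ∈ sem s₂ → ∃ m : List Bool, m.length = τ.length ∧
          m.count true ≤ s₂.size ∧ ∀ m', maskLe m m' → select τ m' ∈ sem s₂) →
        ∀ τ : Trace P, τ ∈ sem s₁ * ⊤ ⊓ sem s₂ →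
        ∃ m : List Bool, m.length = τ.length ∧ m.count true ≤ s₁.size + s₂.size ∧
          ∀ m', maskLe m m' → select τ m' ∈ sem s₁ * ⊤ ⊓ sem s₂ := by
      intro s₁ s₂ hs₁ hs₂ IH₁ IH₂ τ hτ
      obtain ⟨hτ1, hτ2⟩ := hτ
      change τ ∈ (sem s₁ * ⊤ : Language (Val P)) at hτ1
      rw [Language.mem_mul] at hτ1
      obtain ⟨u, hu, w, -, rfl⟩ := hτ1
      obtain ⟨m₁, h1, h2, h3⟩ := IH₁ u hu
      obtain ⟨m₂, g1, g2, g3⟩ := IH₂ (u ++ w) hτ2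
      set mL : List Bool := m₁ ++ List.replicate w.length false with hmL
      have hlen : mL.length = m₂.length := by simp [hmL, h1, g1]
      refine ⟨List.zipWith (· || ·) mL m₂, ?_, ?_, ?_⟩
      · rw [length_zipWith_or hlen]; simp [hmL, h1]
      · refine le_trans (count_or_le mL m₂) ?_
        have : mL.count true = m₁.count true := by
          simp [hmL, List.count_append, List.count_replicate]
        omega
      · intro m' hm'
        have hm'L : maskLe mL m' := maskLe_trans (maskLe_or_left hlen) hm'
        have hm'2 : maskLe m₂ m' := maskLe_trans (maskLe_or_right hlen) hm'
        obtain ⟨a, b, rfl, ha, hb⟩ := maskLe_append_split hm'L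
        refine ⟨?_, ?_⟩
        · rw [select_append _ _ _ _ (by rw [← maskLe_length_eq ha, h1])]
          exact Language.mem_mul.2 ⟨select u a, h3 a ha, select w b, trivial, rfl⟩
        · have := g3 _ hm'2
          exact this
    rcases hτ with hτ | hτ
    · obtain ⟨m, h1, h2, h3⟩ := main t₁ t₂ ht.1 ht.2 (ih₁ ht.1) (ih₂ ht.2) τ hτ
      exact ⟨m, h1, by simpa [ADT.size] using h2, fun m' hm' => Or.inl (h3 m' hm')⟩
    · obtain ⟨m, h1, h2, h3⟩ := main t₂ t₁ ht.2 ht.1 (ih₂ ht.2) (ih₁ ht.1) τ hτ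
      exact ⟨m, h1, by simp [ADT.size]; omega, fun m' hm' => Or.inr (h3 m' hm')⟩
  | cm t₁ t₂ ih₁ ih₂ =>
    intro τ hτ
    have ht' : cd t₁ ≤ 1 ∧ cd t₂ = 0 := by
      simp [cd] at ht; omega
    obtain ⟨hτ1, hτ2⟩ := hτ
    obtain ⟨m₁, h1, h2, h3⟩ := ih₁ ht'.1 τ hτ1
    have hnfi := nfins_of_cd_zero t₂ ht'.2
    rcases τ.eq_nil_or_concat with rfl | ⟨w, v, hc⟩
    · refine ⟨[], rfl, by simp, ?_⟩
      intro m' hm'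
      have : m' = [] := by cases hm'; rfl
      subst this
      exact ⟨hτ1, hτ2⟩
    · rw [List.concat_eq_append] at hc
      subst hc
      set mR : List Bool := List.replicate w.length false ++ [true] with hmR
      have hlen : m₁.length = mR.length := by simp [hmR, h1]
      refine ⟨List.zipWith (· || ·) m₁ mR, ?_, ?_, ?_⟩
      · rw [length_zipWith_or hlen, h1]
      · refine le_trans (count_or_le m₁ mR) ?_
        have : mR.count true = 1 := by
          simp [hmR, List.count_append, List.count_replicate]
        have := t₂.size_pos
        simp [ADT.size]; omega
      · intro m' hm'
        have hm'1 : maskLe m₁ m' := maskLe_trans (maskLe_or_left hlen) hm'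
        have hm'R : maskLe mR m' := maskLe_trans (maskLe_or_right hlen) hm'
        refine ⟨h3 m' hm'1, ?_⟩
        intro hcontra
        obtain ⟨a, b, rfl, ha, hb⟩ := maskLe_append_split hm'R
        have hb' : b = [true] := maskLe_true_singleton hb
        subst hb'
        rw [select_append _ _ _ _ (by simpa using (maskLe_length_eq ha).symm)] at hcontra
        have hsel : select (w ++ [v]) (a ++ [true]) = select w a ++ [v] := by
          rw [select_append _ _ _ _ (by simpa using (maskLe_length_eq ha).symm)]
          simp [select]
        have hsub : List.Sublist (select w a) w := select_sublist w a
        have : [] ++ w ++ [v] ∈ sem t₂ := by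
          refine hnfi.insert_sublist hsub [] [v] (by simp) ?_
          simpa [select] using hcontra
        exact hτ2 (by have h' : w ++ [v] ∈ sem t₂ := by simpa using this
                      exact h')

end ADTLemmas

/-- **Small model property for ADT₁** : an adt `t` with countermeasure-depth at most 1
has nonempty semantics iff it contains a trace of length at most the size of `t`. -/
theorem small_model_property_ADT1 {P : Type} [Fintype P] (t : ADT P) (ht : cd t ≤ 1) :
    Set.Nonempty (sem t : Set (Trace P)) ↔
      ∃ τ : Trace P, τ ∈ sem t ∧ τ.length ≤ ADT.size t := by
  constructor
  · rintro ⟨τ, hτ⟩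
    obtain ⟨m, h1, h2, h3⟩ := exists_witness_mask t ht τ hτ
    exact ⟨select τ m, h3 m (maskLe_refl m), le_trans (length_select_le_count τ m) h2⟩
  · rintro ⟨τ, hτ, -⟩
    exact ⟨τ, hτ⟩

end ADTpaper
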